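/- Let M be a 0-1 matrix avoiding the 2×2 pattern [[1,1],[1,0]] and such that every 3×3 submatrix with at least eight 1's is all 1's. Define the graph H whose vertices are pairs (i,j) with M_{i,j} = 1, with (a,d) adjacent to (c,b) iff a < c, b < d, and M_{a,b} = M_{a,d} = M_{c,b} = M_{c,d} = 1. Then every connected component of H is either an isolated vertex or isomorphic to the graph G(p,q) with its isolated vertices removed, for some p, q ≥ 2, where G(p,q) is the graph on a p×q grid with (i,j) ~ (k,ℓ) iff i < k and j > ℓ. -/

import Mathlib

/-- The graph `G(m,n)`: vertices are pairs `(i,j)` (0-indexed, corresponding to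
`x_{i+1,j+1}`), and `x_{i,j} ~ x_{k,l}` iff (`i < k` and `j > l`) or (`i > k` and `j < l`). -/
def gridGraph (m n : ℕ) : SimpleGraph (Fin m × Fin n) where
  Adj u v := (u.1 < v.1 ∧ v.2 < u.2) ∨ (v.1 < u.1 ∧ u.2 < v.2)
  symm := ⟨fun u v h => Or.symm h⟩
  loopless := ⟨fun u h => by rcases h with ⟨h, -⟩ | ⟨h, -⟩ <;> exact absurd h (lt_irrefl _)⟩

section helpers

variable {m n : ℕ} {M : Fin m → Fin n → Bool}

lemma my_av (havoid : ¬ ∃ (r r' : Fin m) (c c' : Fin n), r < r' ∧ c < c' ∧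
        M r c = true ∧ M r c' = true ∧ M r' c = true ∧ M r' c' = false)
    {r r' : Fin m} {c c' : Fin n} (hr : r < r') (hc : c < c')
    (h1 : M r c = true) (h2 : M r c' = true) (h3 : M r' c = true) :
    M r' c' = true := by
  by_contra h
  exact havoid ⟨r, r', c, c', hr, hc, h1, h2, h3, by simpa using h⟩

lemma my_k9 (hK33 : ∀ (r : Fin 3 → Fin m) (c : Fin 3 → Fin n), StrictMono r → StrictMono c →
      ∀ p q : Fin 3, (∀ p' q' : Fin 3, (p', q') ≠ (p, q) → M (r p') (c q') = true) →
        M (r p) (c q) = true)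
    {x1 x2 x3 : Fin m} {y1 y2 y3 : Fin n}
    (h12 : x1 ≠ x2) (h13 : x1 ≠ x3) (h23 : x2 ≠ x3)
    (k12 : y1 ≠ y2) (k13 : y1 ≠ y3) (k23 : y2 ≠ y3)
    (e12 : M x1 y2 = true) (e13 : M x1 y3 = true)
    (e21 : M x2 y1 = true) (e22 : M x2 y2 = true) (e23 : M x2 y3 = true)
    (e31 : M x3 y1 = true) (e32 : M x3 y2 = true) (e33 : M x3 y3 = true) :
    M x1 y1 = true := by
  classical
  set s : Finset (Fin m) := {x1, x2, x3} with hs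
  have hsc : s.card = 3 := by
    rw [hs, Finset.card_insert_of_notMem (by simp [h12, h13]),
      Finset.card_insert_of_notMem (by simp [h23]), Finset.card_singleton]
  set t : Finset (Fin n) := {y1, y2, y3} with ht
  have htc : t.card = 3 := by
    rw [ht, Finset.card_insert_of_notMem (by simp [k12, k13]),
      Finset.card_insert_of_notMem (by simp [k23]), Finset.card_singleton]
  let ι := s.orderIsoOfFin hsc
  let κ := t.orderIsoOfFin htc
  let r : Fin 3 → Fin m := fun i => (ι i : Fin m)
  let c : Fin 3 → Fin n := fun i => (κ i : Fin n)
  have hrmono : StrictMono r := fun i j hij => Subtype.coe_lt_coe.mpr (ι.lt_iff_lt.mpr hij)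
  have hcmono : StrictMono c := fun i j hij => Subtype.coe_lt_coe.mpr (κ.lt_iff_lt.mpr hij)
  have hrmem : ∀ i, r i = x1 ∨ r i = x2 ∨ r i = x3 := fun i => by
    have h2 : (ι i : Fin m) ∈ ({x1, x2, x3} : Finset (Fin m)) := hs ▸ (ι i).2
    simpa only [Finset.mem_insert, Finset.mem_singleton] using h2
  have hcmem : ∀ i, c i = y1 ∨ c i = y2 ∨ c i = y3 := fun i => by
    have h2 : (κ i : Fin n) ∈ ({y1, y2, y3} : Finset (Fin n)) := ht ▸ (κ i).2
    simpa only [Finset.mem_insert, Finset.mem_singleton] using h2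
  have hx1s : x1 ∈ s := by simp [hs]
  have hy1t : y1 ∈ t := by simp [ht]
  let pa : Fin 3 := ι.symm ⟨x1, hx1s⟩
  let qd : Fin 3 := κ.symm ⟨y1, hy1t⟩
  have hpa : r pa = x1 := congrArg Subtype.val (ι.apply_symm_apply ⟨x1, hx1s⟩)
  have hqd : c qd = y1 := congrArg Subtype.val (κ.apply_symm_apply ⟨y1, hy1t⟩)
  have key := hK33 r c hrmono hcmono pa qd ?_
  · rwa [hpa, hqd] at key
  · intro p' q' hne
    rcases hrmem p' with h | h | h <;> rcases hcmem q' with g | g | g <;>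
      rw [h, g] <;> try assumption
    exfalso
    apply hne
    have hp' : p' = pa := hrmono.injective (h.trans hpa.symm)
    have hq' : q' = qd := hcmono.injective (g.trans hqd.symm)
    rw [hp', hq']

lemma my_bigK (hK33 : ∀ (r : Fin 3 → Fin m) (c : Fin 3 → Fin n), StrictMono r → StrictMono c →
      ∀ p q : Fin 3, (∀ p' q' : Fin 3, (p', q') ≠ (p, q) → M (r p') (c q') = true) →
        M (r p) (c q) = true)
    {r s t : Fin m} {c d e : Fin n} (hrs : r ≠ s) (hcd : c ≠ d)
    (hrc : M r c = true) (hrd : M r d = true) (hsc : M s c = true) (hsd : M s d = true)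
    (htc : M t c = true) (htd : M t d = true) (hre : M r e = true) (hse : M s e = true) :
    M t e = true := by
  rcases eq_or_ne t r with rfl | htr
  · exact hre
  rcases eq_or_ne t s with rfl | hts
  · exact hse
  rcases eq_or_ne e c with rfl | hec
  · exact htc
  rcases eq_or_ne e d with rfl | hed
  · exact htd
  exact my_k9 hK33 htr hts hrs hec hed hcd htc htd hre hrc hrd hse hsc hsd

lemma my_distTwo
    (hav : ∀ {r r' : Fin m} {c c' : Fin n}, r < r' → c < c' →
      M r c = true → M r c' = true → M r' c = true → M r' c' = true)
    (hK33 : ∀ (r : Fin 3 → Fin m) (c : Fin 3 → Fin n), StrictMono r → StrictMono c →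
      ∀ p q : Fin 3, (∀ p' q' : Fin 3, (p', q') ≠ (p, q) → M (r p') (c q') = true) →
        M (r p) (c q) = true)
    {y1 z1 w1 : Fin m} {y2 z2 w2 : Fin n}
    (myy : M y1 y2 = true) (mzz : M z1 z2 = true) (mww : M w1 w2 = true)
    (myz : M y1 z2 = true) (mzy : M z1 y2 = true)
    (mzw : M z1 w2 = true) (mwz : M w1 z2 = true)
    (hyz : (y1 < z1 ∧ z2 < y2) ∨ (z1 < y1 ∧ y2 < z2))
    (hzw : (z1 < w1 ∧ w2 < z2) ∨ (w1 < z1 ∧ z2 < w2)) : M y1 w2 = true := by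
  rcases hyz with ⟨h1, h2⟩ | ⟨h1, h2⟩ <;> rcases hzw with ⟨h3, h4⟩ | ⟨h3, h4⟩
  · have mwy : M w1 y2 = true := hav h3 h2 mzz mzy mwz
    exact my_bigK hK33 (ne_of_lt h3) (ne_of_lt h2) mzz mzy mwz mwy myz myy mzw mww
  · rcases lt_trichotomy w1 y1 with h | h | h
    · exact hav h h4 mwz mww myz
    · rw [← h]; exact mww
    · have mwy : M w1 y2 = true := hav h h2 myz myy mwz
      exact my_bigK hK33 (ne_of_gt h3) (ne_of_lt h2) mzz mzy mwz mwy myz myy mzw mww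
  · rcases lt_trichotomy w2 y2 with h | h | h
    · have mwy : M w1 y2 = true := hav h3 h mzw mzy mww
      exact my_bigK hK33 (ne_of_lt h3) (ne_of_gt h2) mzz mzy mwz mwy myz myy mzw mww
    · rw [h]; exact myy
    · exact hav h1 h mzy mzw myy
  · exact hav h1 h4 mzz mzw myz

lemma my_qstep
    (hav : ∀ {r r' : Fin m} {c c' : Fin n}, r < r' → c < c' →
      M r c = true → M r c' = true → M r' c = true → M r' c' = true)
    (hK33 : ∀ (r : Fin 3 → Fin m) (c : Fin 3 → Fin n), StrictMono r → StrictMono c →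
      ∀ p q : Fin 3, (∀ p' q' : Fin 3, (p', q') ≠ (p, q) → M (r p') (c q') = true) →
        M (r p) (c q) = true)
    {u1 y1 z1 w1 : Fin m} {u2 y2 z2 w2 : Fin n}
    (myy : M y1 y2 = true) (mzz : M z1 z2 = true) (mww : M w1 w2 = true)
    (myz : M y1 z2 = true) (mzy : M z1 y2 = true)
    (mzw : M z1 w2 = true) (mwz : M w1 z2 = true)
    (muy : M u1 y2 = true) (myu : M y1 u2 = true)
    (muz : M u1 z2 = true) (mzu : M z1 u2 = true)
    (hyz : (y1 < z1 ∧ z2 < y2) ∨ (z1 < y1 ∧ y2 < z2))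
    (hzw : (z1 < w1 ∧ w2 < z2) ∨ (w1 < z1 ∧ z2 < w2)) :
    M u1 w2 = true ∧ M w1 u2 = true := by
  have myw : M y1 w2 = true := my_distTwo hav hK33 myy mzz mww myz mzy mzw mwz hyz hzw
  have mwy : M w1 y2 = true :=
    my_distTwo hav hK33 mww mzz myy mwz mzw mzy myz (Or.symm hzw) (Or.symm hyz)
  have hne1 : y1 ≠ z1 := hyz.elim (fun h => ne_of_lt h.1) (fun h => ne_of_gt h.1)
  have hne2 : y2 ≠ z2 := hyz.elim (fun h => ne_of_gt h.2) (fun h => ne_of_lt h.2)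
  exact ⟨my_bigK hK33 hne1 hne2 myy myz mzy mzz muy muz myw mzw,
    my_bigK hK33 hne1 hne2 myy myz mzy mzz mwy mwz myu mzu⟩

end helpers

lemma grid_adj {p q : ℕ} (u w : Fin p × Fin q) :
    (gridGraph p q).Adj u w ↔ (u.1 < w.1 ∧ w.2 < u.2) ∨ (w.1 < u.1 ∧ u.2 < w.2) := Iff.rfl

lemma grid_noniso {p q : ℕ} (hp : 2 ≤ p) (hq : 2 ≤ q) (u : Fin p × Fin q) :
    (∃ w, (gridGraph p q).Adj u w) ↔
      ¬(u.1.val = 0 ∧ u.2.val = 0) ∧ ¬(u.1.val = p - 1 ∧ u.2.val = q - 1) := by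
  constructor
  · rintro ⟨w, hw⟩
    rw [grid_adj] at hw
    have h1 := w.1.isLt; have h2 := w.2.isLt
    rcases hw with ⟨ha, hb⟩ | ⟨ha, hb⟩ <;>
      rw [Fin.lt_def] at ha hb <;>
      exact ⟨fun h => by omega, fun h => by omega⟩
  · rintro ⟨h1, h2⟩
    by_cases hu1 : u.1.val = 0
    · have hu2 : u.2.val ≠ 0 := fun h => h1 ⟨hu1, h⟩
      refine ⟨(⟨1, by omega⟩, ⟨u.2.val - 1, by omega⟩), Or.inl ⟨?_, ?_⟩⟩ <;>
        (rw [Fin.lt_def]; simp; try omega)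
    · by_cases hu2 : u.2.val = q - 1
      · have hu1' : u.1.val ≠ p - 1 := fun h => h2 ⟨h, hu2⟩
        have := u.1.isLt
        refine ⟨(⟨u.1.val + 1, by omega⟩, ⟨0, by omega⟩), Or.inl ⟨?_, ?_⟩⟩ <;>
          (rw [Fin.lt_def]; simp; try omega)
      · have := u.2.isLt
        refine ⟨(⟨u.1.val - 1, by omega⟩, ⟨u.2.val + 1, by omega⟩), Or.inr ⟨?_, ?_⟩⟩ <;>
          (rw [Fin.lt_def]; simp; try omega)

theorem stmt16 (m n : ℕ) (M : Fin m → Fin n → Bool)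
    (havoid : ¬ ∃ (r r' : Fin m) (c c' : Fin n), r < r' ∧ c < c' ∧
        M r c = true ∧ M r c' = true ∧ M r' c = true ∧ M r' c' = false)
    (hK33 : ∀ (r : Fin 3 → Fin m) (c : Fin 3 → Fin n), StrictMono r → StrictMono c →
      ∀ p q : Fin 3, (∀ p' q' : Fin 3, (p', q') ≠ (p, q) → M (r p') (c q') = true) →
        M (r p) (c q) = true)
    (H : SimpleGraph {p : Fin m × Fin n // M p.1 p.2 = true})
    (hH : ∀ u v, H.Adj u v ↔
      ((u.1.1 < v.1.1 ∧ v.1.2 < u.1.2 ∧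
          M u.1.1 v.1.2 = true ∧ M v.1.1 u.1.2 = true) ∨
       (v.1.1 < u.1.1 ∧ u.1.2 < v.1.2 ∧
          M v.1.1 u.1.2 = true ∧ M u.1.1 v.1.2 = true))) :
    ∀ v, (∀ w, ¬ H.Adj v w) ∨
      ∃ p q : ℕ, 2 ≤ p ∧ 2 ≤ q ∧
        Nonempty ((H.induce {w | H.Reachable v w}) ≃g
          ((gridGraph p q).induce {u | ∃ w, (gridGraph p q).Adj u w})) := by
  classical
  intro v
  by_cases hv : ∀ w, ¬ H.Adj v w
  · exact Or.inl hv
  right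
  push_neg at hv
  obtain ⟨w0, hw0⟩ := hv
  have hav : ∀ {r r' : Fin m} {c c' : Fin n}, r < r' → c < c' →
      M r c = true → M r c' = true → M r' c = true → M r' c' = true :=
    fun hr hc h1 h2 h3 => my_av havoid hr hc h1 h2 h3
  have adj_iff : ∀ x y : {p : Fin m × Fin n // M p.1 p.2 = true}, H.Adj x y ↔
      (((x.1.1 < y.1.1 ∧ y.1.2 < x.1.2) ∨ (y.1.1 < x.1.1 ∧ x.1.2 < y.1.2)) ∧
        (M x.1.1 y.1.2 = true ∧ M y.1.1 x.1.2 = true)) := by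
    intro x y
    rw [hH]
    constructor
    · rintro (⟨a, b, c, d⟩ | ⟨a, b, c, d⟩)
      exacts [⟨Or.inl ⟨a, b⟩, c, d⟩, ⟨Or.inr ⟨a, b⟩, d, c⟩]
    · rintro ⟨(⟨a, b⟩ | ⟨a, b⟩), c, d⟩
      exacts [Or.inl ⟨a, b, c, d⟩, Or.inr ⟨a, b, d, c⟩]
  -- all pairs in a component satisfy Q
  have aux : ∀ (x u : {p : Fin m × Fin n // M p.1 p.2 = true}) (p : H.Walk x u),
      ((M u.1.1 x.1.2 = true ∧ M x.1.1 u.1.2 = true) ∧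
        ∀ w, H.Adj x w → (M u.1.1 w.1.2 = true ∧ M w.1.1 u.1.2 = true)) := by
    intro x u p
    induction p with
    | nil =>
      rename_i z
      exact ⟨⟨z.2, z.2⟩, fun w hw => ((adj_iff z w).mp hw).2⟩
    | @cons a b u' h q ih =>
      have hQx : M u'.1.1 a.1.2 = true ∧ M a.1.1 u'.1.2 = true := ih.2 a h.symm
      refine ⟨hQx, ?_⟩
      intro w hw
      obtain ⟨hopp1, me1a, me1b⟩ := (adj_iff b a).mp h.symm
      obtain ⟨hopp2, me2a, me2b⟩ := (adj_iff a w).mp hw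
      exact my_qstep hav hK33 b.2 a.2 w.2 me1a me1b me2a me2b ih.1.1 ih.1.2 hQx.1 hQx.2
        hopp1 hopp2
  have main : ∀ (u x : {p : Fin m × Fin n // M p.1 p.2 = true}), H.Reachable u x →
      (M u.1.1 x.1.2 = true ∧ M x.1.1 u.1.2 = true) := by
    intro u x hr
    obtain ⟨p⟩ := hr.symm
    exact (aux x u p).1
  -- row and column sets of the component
  set Rset : Finset (Fin m) := Finset.univ.filter
    (fun r => ∃ x : {p : Fin m × Fin n // M p.1 p.2 = true}, H.Reachable v x ∧ x.1.1 = r)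
    with hRset_def
  set Cset : Finset (Fin n) := Finset.univ.filter
    (fun c => ∃ x : {p : Fin m × Fin n // M p.1 p.2 = true}, H.Reachable v x ∧ x.1.2 = c)
    with hCset_def
  have memR : ∀ r : Fin m, r ∈ Rset ↔
      ∃ x : {p : Fin m × Fin n // M p.1 p.2 = true}, H.Reachable v x ∧ x.1.1 = r := by
    intro r; rw [hRset_def]; simp
  have memC : ∀ c : Fin n, c ∈ Cset ↔
      ∃ x : {p : Fin m × Fin n // M p.1 p.2 = true}, H.Reachable v x ∧ x.1.2 = c := by
    intro c; rw [hCset_def]; simp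
  have blockOnes : ∀ {r c}, r ∈ Rset → c ∈ Cset → M r c = true := by
    intro r c hr hc
    obtain ⟨x, hx, rfl⟩ := (memR r).mp hr
    obtain ⟨y, hy, rfl⟩ := (memC c).mp hc
    exact (main x y (hx.symm.trans hy)).1
  have hvR : v.1.1 ∈ Rset := (memR _).mpr ⟨v, SimpleGraph.Reachable.refl v, rfl⟩
  have hvC : v.1.2 ∈ Cset := (memC _).mpr ⟨v, SimpleGraph.Reachable.refl v, rfl⟩
  have hw0R : w0.1.1 ∈ Rset := (memR _).mpr ⟨w0, hw0.reachable, rfl⟩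
  have hw0C : w0.1.2 ∈ Cset := (memC _).mpr ⟨w0, hw0.reachable, rfl⟩
  have hopp0 := ((adj_iff v w0).mp hw0).1
  have hcardR : 1 < Rset.card := Finset.one_lt_card.mpr
    ⟨_, hvR, _, hw0R, by rcases hopp0 with ⟨h, -⟩ | ⟨h, -⟩; exacts [ne_of_lt h, ne_of_gt h]⟩
  have hcardC : 1 < Cset.card := Finset.one_lt_card.mpr
    ⟨_, hvC, _, hw0C, by rcases hopp0 with ⟨-, h⟩ | ⟨-, h⟩; exacts [ne_of_gt h, ne_of_lt h]⟩
  have hRne : Rset.Nonempty := ⟨_, hvR⟩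
  have hCne : Cset.Nonempty := ⟨_, hvC⟩
  set rmin := Rset.min' hRne with hrmin_def
  set rmax := Rset.max' hRne with hrmax_def
  set cmin := Cset.min' hCne with hcmin_def
  set cmax := Cset.max' hCne with hcmax_def
  have hrlt : rmin < rmax := Finset.min'_lt_max'_of_card _ hcardR
  have hclt : cmin < cmax := Finset.min'_lt_max'_of_card _ hcardC
  -- the two extreme corners are not in the component
  have b2min : ∀ x : {p : Fin m × Fin n // M p.1 p.2 = true}, H.Reachable v x →
      ¬(x.1.1 = rmin ∧ x.1.2 = cmin) := by
    rintro x hx ⟨h1, h2⟩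
    have hxy : ∃ y, H.Adj x y := by
      obtain ⟨pw⟩ := hx.symm
      cases pw with
      | nil => exact ⟨w0, hw0⟩
      | cons h q => exact ⟨_, h⟩
    obtain ⟨y, hy⟩ := hxy
    have hyS : H.Reachable v y := hx.trans hy.reachable
    have hyR : rmin ≤ y.1.1 := Finset.min'_le _ _ ((memR _).mpr ⟨y, hyS, rfl⟩)
    have hyC : cmin ≤ y.1.2 := Finset.min'_le _ _ ((memC _).mpr ⟨y, hyS, rfl⟩)
    rcases ((adj_iff x y).mp hy).1 with ⟨ha, hb⟩ | ⟨ha, hb⟩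
    · rw [h2] at hb; exact absurd hb (not_lt.mpr hyC)
    · rw [h1] at ha; exact absurd ha (not_lt.mpr hyR)
  have b2max : ∀ x : {p : Fin m × Fin n // M p.1 p.2 = true}, H.Reachable v x →
      ¬(x.1.1 = rmax ∧ x.1.2 = cmax) := by
    rintro x hx ⟨h1, h2⟩
    have hxy : ∃ y, H.Adj x y := by
      obtain ⟨pw⟩ := hx.symm
      cases pw with
      | nil => exact ⟨w0, hw0⟩
      | cons h q => exact ⟨_, h⟩
    obtain ⟨y, hy⟩ := hxy
    have hyS : H.Reachable v y := hx.trans hy.reachable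
    have hyR : y.1.1 ≤ rmax := Finset.le_max' _ _ ((memR _).mpr ⟨y, hyS, rfl⟩)
    have hyC : y.1.2 ≤ cmax := Finset.le_max' _ _ ((memC _).mpr ⟨y, hyS, rfl⟩)
    rcases ((adj_iff x y).mp hy).1 with ⟨ha, hb⟩ | ⟨ha, hb⟩
    · rw [h1] at ha; exact absurd ha (not_lt.mpr hyR)
    · rw [h2] at hb; exact absurd hb (not_lt.mpr hyC)
  -- witnesses
  obtain ⟨xa, hxa, hxar⟩ := (memR rmin).mp (Rset.min'_mem hRne)
  obtain ⟨xb, hxb, hxbc⟩ := (memC cmin).mp (Cset.min'_mem hCne)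
  have hxa_col : cmin < xa.1.2 :=
    lt_of_le_of_ne (Finset.min'_le _ _ ((memC _).mpr ⟨xa, hxa, rfl⟩))
      (fun h => b2min xa hxa ⟨hxar, h.symm⟩)
  have hxb_row : rmin < xb.1.1 :=
    lt_of_le_of_ne (Finset.min'_le _ _ ((memR _).mpr ⟨xb, hxb, rfl⟩))
      (fun h => b2min xb hxb ⟨h.symm, hxbc⟩)
  have hMA : M rmax cmin = true := blockOnes (Rset.max'_mem hRne) (Cset.min'_mem hCne)
  have hMB : M rmin cmax = true := blockOnes (Rset.min'_mem hRne) (Cset.max'_mem hCne)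
  have hA : H.Reachable v ⟨(rmax, cmin), hMA⟩ := by
    have hadj : H.Adj (⟨(rmax, cmin), hMA⟩ : {p : Fin m × Fin n // M p.1 p.2 = true}) xa :=
      (adj_iff _ _).mpr ⟨Or.inr ⟨hxar ▸ hrlt, hxa_col⟩,
        blockOnes (Rset.max'_mem hRne) ((memC _).mpr ⟨xa, hxa, rfl⟩),
        blockOnes ((memR _).mpr ⟨xa, hxa, rfl⟩) (Cset.min'_mem hCne)⟩
    exact hxa.trans hadj.symm.reachable
  have hB : H.Reachable v ⟨(rmin, cmax), hMB⟩ := by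
    have hadj : H.Adj (⟨(rmin, cmax), hMB⟩ : {p : Fin m × Fin n // M p.1 p.2 = true}) xb :=
      (adj_iff _ _).mpr ⟨Or.inl ⟨hxb_row, hxbc ▸ hclt⟩,
        blockOnes (Rset.min'_mem hRne) ((memC _).mpr ⟨xb, hxb, rfl⟩),
        blockOnes ((memR _).mpr ⟨xb, hxb, rfl⟩) (Cset.max'_mem hCne)⟩
    exact hxb.trans hadj.symm.reachable
  -- every non-corner block entry is in the component
  have inS : ∀ {r c} (hr : r ∈ Rset) (hc : c ∈ Cset), ¬(r = rmin ∧ c = cmin) →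
      ¬(r = rmax ∧ c = cmax) → H.Reachable v ⟨(r, c), blockOnes hr hc⟩ := by
    intro r c hr hc h1 h2
    by_cases hcc : c = cmin
    · subst hcc
      have hne : rmin < r := lt_of_le_of_ne (Finset.min'_le _ _ hr)
        (fun h => h1 ⟨h.symm, rfl⟩)
      have hadj : H.Adj (⟨(r, cmin), blockOnes hr hc⟩ :
          {p : Fin m × Fin n // M p.1 p.2 = true}) ⟨(rmin, cmax), hMB⟩ :=
        (adj_iff _ _).mpr ⟨Or.inr ⟨hne, hclt⟩,
          blockOnes hr (Cset.max'_mem hCne),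
          blockOnes (Rset.min'_mem hRne) (Cset.min'_mem hCne)⟩
      exact hB.trans hadj.symm.reachable
    · by_cases hrr : r = rmax
      · subst hrr
        have hne : c < cmax := lt_of_le_of_ne (Finset.le_max' _ _ hc)
          (fun h => h2 ⟨rfl, h⟩)
        have hadj : H.Adj (⟨(rmax, c), blockOnes hr hc⟩ :
            {p : Fin m × Fin n // M p.1 p.2 = true}) ⟨(rmin, cmax), hMB⟩ :=
          (adj_iff _ _).mpr ⟨Or.inr ⟨hrlt, hne⟩,
            blockOnes hr (Cset.max'_mem hCne),
            blockOnes (Rset.min'_mem hRne) hc⟩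
        exact hB.trans hadj.symm.reachable
      · have hner : r < rmax := lt_of_le_of_ne (Finset.le_max' _ _ hr) hrr
        have hnec : cmin < c := lt_of_le_of_ne (Finset.min'_le _ _ hc) (Ne.symm hcc)
        have hadj : H.Adj (⟨(r, c), blockOnes hr hc⟩ :
            {p : Fin m × Fin n // M p.1 p.2 = true}) ⟨(rmax, cmin), hMA⟩ :=
          (adj_iff _ _).mpr ⟨Or.inl ⟨hner, hnec⟩,
            blockOnes hr (Cset.min'_mem hCne),
            blockOnes (Rset.max'_mem hRne) hc⟩
        exact hA.trans hadj.symm.reachable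
  -- set up the isomorphism
  refine ⟨Rset.card, Cset.card, hcardR, hcardC, ?_⟩
  set ι := Rset.orderIsoOfFin rfl with hι_def
  set κ := Cset.orderIsoOfFin rfl with hκ_def
  have hp0 : 0 < Rset.card := by omega
  have hq0 : 0 < Cset.card := by omega
  have iota_min : (ι ⟨0, hp0⟩ : Fin m) = rmin := by
    refine le_antisymm ?_ (Finset.min'_le _ _ (ι ⟨0, hp0⟩).2)
    calc (ι ⟨0, hp0⟩ : Fin m) ≤ (ι (ι.symm ⟨rmin, Rset.min'_mem hRne⟩) : Fin m) :=
          Subtype.coe_le_coe.mpr (ι.monotone (Fin.mk_le_of_le_val (Nat.zero_le _)))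
      _ = rmin := by rw [ι.apply_symm_apply]
  have iota_max : (ι ⟨Rset.card - 1, by omega⟩ : Fin m) = rmax := by
    refine le_antisymm (Finset.le_max' _ _ (ι ⟨Rset.card - 1, by omega⟩).2) ?_
    calc rmax = (ι (ι.symm ⟨rmax, Rset.max'_mem hRne⟩) : Fin m) := by rw [ι.apply_symm_apply]
      _ ≤ (ι ⟨Rset.card - 1, by omega⟩ : Fin m) := by
          refine Subtype.coe_le_coe.mpr (ι.monotone ?_)
          exact Fin.le_def.mpr (Nat.le_sub_one_of_lt (ι.symm ⟨rmax, Rset.max'_mem hRne⟩).isLt)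
  have kappa_min : (κ ⟨0, hq0⟩ : Fin n) = cmin := by
    refine le_antisymm ?_ (Finset.min'_le _ _ (κ ⟨0, hq0⟩).2)
    calc (κ ⟨0, hq0⟩ : Fin n) ≤ (κ (κ.symm ⟨cmin, Cset.min'_mem hCne⟩) : Fin n) :=
          Subtype.coe_le_coe.mpr (κ.monotone (Fin.mk_le_of_le_val (Nat.zero_le _)))
      _ = cmin := by rw [κ.apply_symm_apply]
  have kappa_max : (κ ⟨Cset.card - 1, by omega⟩ : Fin n) = cmax := by
    refine le_antisymm (Finset.le_max' _ _ (κ ⟨Cset.card - 1, by omega⟩).2) ?_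
    calc cmax = (κ (κ.symm ⟨cmax, Cset.max'_mem hCne⟩) : Fin n) := by rw [κ.apply_symm_apply]
      _ ≤ (κ ⟨Cset.card - 1, by omega⟩ : Fin n) := by
          refine Subtype.coe_le_coe.mpr (κ.monotone ?_)
          exact Fin.le_def.mpr (Nat.le_sub_one_of_lt (κ.symm ⟨cmax, Cset.max'_mem hCne⟩).isLt)
  have hmemr : ∀ x : {p : Fin m × Fin n // M p.1 p.2 = true}, H.Reachable v x →
      x.1.1 ∈ Rset := fun x hx => (memR _).mpr ⟨x, hx, rfl⟩
  have hmemc : ∀ x : {p : Fin m × Fin n // M p.1 p.2 = true}, H.Reachable v x →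
      x.1.2 ∈ Cset := fun x hx => (memC _).mpr ⟨x, hx, rfl⟩
  have hni : ∀ (x : {p : Fin m × Fin n // M p.1 p.2 = true}) (hx : H.Reachable v x),
      (ι.symm ⟨x.1.1, hmemr x hx⟩, κ.symm ⟨x.1.2, hmemc x hx⟩) ∈
        {u : Fin Rset.card × Fin Cset.card | ∃ w, (gridGraph Rset.card Cset.card).Adj u w} := by
    intro x hx
    rw [Set.mem_setOf_eq, grid_noniso hcardR hcardC]
    constructor
    · rintro ⟨h1, h2⟩
      apply b2min x hx
      constructor
      · have h1' : ι.symm ⟨x.1.1, hmemr x hx⟩ = ⟨0, hp0⟩ := Fin.ext h1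
        have := (OrderIso.symm_apply_eq ι).mp h1'
        have := congrArg Subtype.val this
        rw [iota_min] at this
        exact this
      · have h2' : κ.symm ⟨x.1.2, hmemc x hx⟩ = ⟨0, hq0⟩ := Fin.ext h2
        have := (OrderIso.symm_apply_eq κ).mp h2'
        have := congrArg Subtype.val this
        rw [kappa_min] at this
        exact this
    · rintro ⟨h1, h2⟩
      apply b2max x hx
      constructor
      · have h1' : ι.symm ⟨x.1.1, hmemr x hx⟩ = ⟨Rset.card - 1, by omega⟩ := Fin.ext h1
        have := (OrderIso.symm_apply_eq ι).mp h1'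
        have := congrArg Subtype.val this
        rw [iota_max] at this
        exact this
      · have h2' : κ.symm ⟨x.1.2, hmemc x hx⟩ = ⟨Cset.card - 1, by omega⟩ := Fin.ext h2
        have := (OrderIso.symm_apply_eq κ).mp h2'
        have := congrArg Subtype.val this
        rw [kappa_max] at this
        exact this
  have hMg : ∀ u : Fin Rset.card × Fin Cset.card,
      M (ι u.1 : Fin m) (κ u.2 : Fin n) = true := fun u => blockOnes (ι u.1).2 (κ u.2).2
  have hrg : ∀ u : Fin Rset.card × Fin Cset.card,
      u ∈ {u : Fin Rset.card × Fin Cset.card |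
        ∃ w, (gridGraph Rset.card Cset.card).Adj u w} →
      H.Reachable v ⟨((ι u.1 : Fin m), (κ u.2 : Fin n)), hMg u⟩ := by
    intro u hu
    obtain ⟨hn1, hn2⟩ := (grid_noniso hcardR hcardC u).mp hu
    apply inS (ι u.1).2 (κ u.2).2
    · rintro ⟨h1, h2⟩
      apply hn1
      constructor
      · exact congrArg Fin.val (ι.injective (Subtype.ext (h1.trans iota_min.symm)))
      · exact congrArg Fin.val (κ.injective (Subtype.ext (h2.trans kappa_min.symm)))
    · rintro ⟨h1, h2⟩
      apply hn2
      constructor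
      · exact congrArg Fin.val (ι.injective (Subtype.ext (h1.trans iota_max.symm)))
      · exact congrArg Fin.val (κ.injective (Subtype.ext (h2.trans kappa_max.symm)))
  refine ⟨⟨⟨fun x => ⟨(ι.symm ⟨x.1.1.1, hmemr x.1 x.2⟩, κ.symm ⟨x.1.1.2, hmemc x.1 x.2⟩),
      hni x.1 x.2⟩,
    fun u => ⟨⟨((ι u.1.1 : Fin m), (κ u.1.2 : Fin n)), hMg u.1⟩, hrg u.1 u.2⟩,
    ?_, ?_⟩, ?_⟩⟩
  · intro x
    apply Subtype.ext
    apply Subtype.ext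
    dsimp only
    exact Prod.ext (by rw [ι.apply_symm_apply]) (by rw [κ.apply_symm_apply])
  · intro u
    apply Subtype.ext
    dsimp only
    refine Prod.ext ?_ ?_
    · rw [Subtype.coe_eta, ι.symm_apply_apply]
    · rw [Subtype.coe_eta, κ.symm_apply_apply]
  · intro a b
    simp only [Equiv.coe_fn_mk, SimpleGraph.comap_adj, Function.Embedding.coe_subtype]
    rw [grid_adj, adj_iff]
    have ltR : ∀ (r r' : Fin m) (hr : r ∈ Rset) (hr' : r' ∈ Rset),
        ι.symm ⟨r, hr⟩ < ι.symm ⟨r', hr'⟩ ↔ r < r' := by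
      intro r r' hr hr'
      rw [OrderIso.lt_iff_lt]
      exact Subtype.mk_lt_mk
    have ltC : ∀ (c c' : Fin n) (hc : c ∈ Cset) (hc' : c' ∈ Cset),
        κ.symm ⟨c, hc⟩ < κ.symm ⟨c', hc'⟩ ↔ c < c' := by
      intro c c' hc hc'
      rw [OrderIso.lt_iff_lt]
      exact Subtype.mk_lt_mk
    constructor
    · rintro (⟨h1, h2⟩ | ⟨h1, h2⟩)
      · exact ⟨Or.inl ⟨(ltR _ _ _ _).mp h1, (ltC _ _ _ _).mp h2⟩,
          blockOnes (hmemr a.1 a.2) (hmemc b.1 b.2), blockOnes (hmemr b.1 b.2) (hmemc a.1 a.2)⟩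
      · exact ⟨Or.inr ⟨(ltR _ _ _ _).mp h1, (ltC _ _ _ _).mp h2⟩,
          blockOnes (hmemr a.1 a.2) (hmemc b.1 b.2), blockOnes (hmemr b.1 b.2) (hmemc a.1 a.2)⟩
    · rintro ⟨(⟨h1, h2⟩ | ⟨h1, h2⟩), -, -⟩
      · exact Or.inl ⟨(ltR _ _ _ _).mpr h1, (ltC _ _ _ _).mpr h2⟩
      · exact Or.inr ⟨(ltR _ _ _ _).mpr h1, (ltC _ _ _ _).mpr h2⟩
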